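/- Let U = (0,∞) × (0,∞) ⊆ ℝ². The set of triples (a,b,c) of smooth real-valued functions on U satisfying the system ∂_y a = 0; (y²+x)·∂_x a + (y²+x)·∂_y b + 2a + 2y·b = 0; (y²+x)·∂_x b + (y²+x)·∂_y c + b + 4y·c = 0; ∂_x c = 0 is a real vector space of dimension exactly 3. -/

import Mathlib

noncomputable section

/-- The partial derivative of `f : ℝ² → ℝ` in the `i`-th coordinate direction
(`0 ↦ x`, `1 ↦ y`). -/
def pd (i : Fin 2) (f : ℝ × ℝ → ℝ) (p : ℝ × ℝ) : ℝ :=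
  fderiv ℝ f p (if i = 0 then ((1 : ℝ), (0 : ℝ)) else ((0 : ℝ), (1 : ℝ)))

/-- `(a,b,c)` is a smooth solution on `U = (0,∞)×(0,∞)` of the system of PDEs expressing
that `F = a p₁² + b p₁p₂ + c p₂²` is an integral of the geodesic flow of
`ds² = 2(y²+x)dxdy` (the case `Y(y) = y²`, case 3d). -/
def Sol3d (a b c : ℝ × ℝ → ℝ) : Prop :=
  ContDiffOn ℝ (⊤ : ℕ∞) a (Set.Ioi 0 ×ˢ Set.Ioi 0) ∧
  ContDiffOn ℝ (⊤ : ℕ∞) b (Set.Ioi 0 ×ˢ Set.Ioi 0) ∧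
  ContDiffOn ℝ (⊤ : ℕ∞) c (Set.Ioi 0 ×ˢ Set.Ioi 0) ∧
  ∀ p ∈ (Set.Ioi 0 ×ˢ Set.Ioi 0 : Set (ℝ × ℝ)),
    pd 1 a p = 0 ∧
    (p.2 ^ 2 + p.1) * pd 0 a p + (p.2 ^ 2 + p.1) * pd 1 b p
      + 2 * a p + 2 * p.2 * b p = 0 ∧
    (p.2 ^ 2 + p.1) * pd 0 b p + (p.2 ^ 2 + p.1) * pd 1 c p
      + b p + 4 * p.2 * c p = 0 ∧
    pd 0 c p = 0

lemma slice_x {f : ℝ × ℝ → ℝ} {p : ℝ × ℝ} (hf : DifferentiableAt ℝ f p) :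
    HasDerivAt (fun t => f (t, p.2)) (pd 0 f p) p.1 := by
  have h1 : HasDerivAt (fun t : ℝ => (t, p.2)) ((1:ℝ), (0:ℝ)) p.1 :=
    (hasDerivAt_id p.1).prodMk (hasDerivAt_const p.1 p.2)
  have h2 := hf.hasFDerivAt.comp_hasDerivAt_of_eq p.1 h1 (by simp)
  have h3 : HasDerivAt (fun t => f (t, p.2)) (fderiv ℝ f p ((1:ℝ), (0:ℝ))) p.1 := h2
  simpa [pd, Function.comp] using h3

lemma slice_y {f : ℝ × ℝ → ℝ} {p : ℝ × ℝ} (hf : DifferentiableAt ℝ f p) :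
    HasDerivAt (fun s => f (p.1, s)) (pd 1 f p) p.2 := by
  have h1 : HasDerivAt (fun s : ℝ => (p.1, s)) ((0:ℝ), (1:ℝ)) p.2 :=
    (hasDerivAt_const p.2 p.1).prodMk (hasDerivAt_id p.2)
  have h2 := hf.hasFDerivAt.comp_hasDerivAt_of_eq p.2 h1 (by simp)
  have h3 : HasDerivAt (fun s => f (p.1, s)) (fderiv ℝ f p ((0:ℝ), (1:ℝ))) p.2 := h2
  simpa [pd, Function.comp] using h3

lemma constIoi {f : ℝ → ℝ} (h : ∀ x ∈ Set.Ioi (0:ℝ), HasDerivAt f 0 x) :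
    ∀ x ∈ Set.Ioi (0:ℝ), f x = f 1 := by
  intro x hx
  refine (convex_Ioi (0:ℝ)).is_const_of_fderivWithin_eq_zero
    (fun y hy => ((h y hy).differentiableAt).differentiableWithinAt)
    (fun y hy => ?_) hx (by norm_num)
  rw [fderivWithin_of_isOpen isOpen_Ioi hy, (h y hy).hasFDerivAt.fderiv]
  ext t
  simp

lemma derivCD {g : ℝ → ℝ} (hg : ContDiffOn ℝ (⊤:ℕ∞) g (Set.Ioi 0)) :
    ContDiffOn ℝ (⊤:ℕ∞) (deriv g) (Set.Ioi 0) :=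
  hg.deriv_of_isOpen isOpen_Ioi (by norm_cast)

lemma derivHD {g : ℝ → ℝ} (hg : ContDiffOn ℝ (⊤:ℕ∞) g (Set.Ioi 0)) {x : ℝ}
    (hx : x ∈ Set.Ioi 0) : HasDerivAt g (deriv g x) x :=
  ((hg.contDiffAt (isOpen_Ioi.mem_nhds hx)).differentiableAt
    (by simp)).hasDerivAt

def famA (α β : ℝ) : ℝ × ℝ → ℝ := fun p => α + β * p.1
def famB (α β γ : ℝ) : ℝ × ℝ → ℝ :=
  fun p => (γ - 2*α*p.2 - β*(p.2^3/3 + 3*p.1*p.2)) / (p.2^2 + p.1)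
def famC (β : ℝ) : ℝ × ℝ → ℝ := fun _ => 3/4*β

lemma famSol (α β γ : ℝ) : Sol3d (famA α β) (famB α β γ) (famC β) := by
  have hU : IsOpen ((Set.Ioi 0 ×ˢ Set.Ioi 0 : Set (ℝ × ℝ))) := isOpen_Ioi.prod isOpen_Ioi
  have hNc : ContDiff ℝ (⊤:ℕ∞) (fun p : ℝ × ℝ => γ - 2*α*p.2 - β*(p.2^3/3 + 3*p.1*p.2)) := by
    have : (fun p : ℝ × ℝ => γ - 2*α*p.2 - β*(p.2^3/3 + 3*p.1*p.2))
        = fun p : ℝ × ℝ => γ - 2*α*p.2 - ((β/3)*p.2^3 + (3*β)*(p.1*p.2)) := by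
      funext q; ring
    rw [this]; fun_prop
  have hDc : ContDiff ℝ (⊤:ℕ∞) (fun p : ℝ × ℝ => p.2^2 + p.1) := by fun_prop
  have hDne : ∀ p ∈ (Set.Ioi 0 ×ˢ Set.Ioi 0 : Set (ℝ × ℝ)), p.2^2 + p.1 ≠ 0 := by
    rintro p ⟨hx, hy⟩
    have hx' : (0:ℝ) < p.1 := hx
    positivity
  have hBc : ContDiffOn ℝ (⊤:ℕ∞) (famB α β γ) (Set.Ioi 0 ×ˢ Set.Ioi 0) :=
    hNc.contDiffOn.div hDc.contDiffOn hDne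
  have hAc : ContDiff ℝ (⊤:ℕ∞) (famA α β) := by unfold famA; fun_prop
  refine ⟨hAc.contDiffOn, hBc, contDiff_const.contDiffOn, ?_⟩
  rintro p hp
  obtain ⟨hx, hy⟩ := hp
  have hx' : (0:ℝ) < p.1 := hx
  have hy' : (0:ℝ) < p.2 := hy
  have hD : p.2^2 + p.1 ≠ 0 := by positivity
  have hBd : DifferentiableAt ℝ (famB α β γ) p :=
    (hBc.contDiffAt (hU.mem_nhds ⟨hx, hy⟩)).differentiableAt (by simp)
  have hAd : DifferentiableAt ℝ (famA α β) p := hAc.differentiable (by simp) p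
  set x := p.1 with hxdef
  set y := p.2 with hydef
  have hpa0 : pd 0 (famA α β) p = β := by
    refine (slice_x hAd).unique ?_
    unfold famA
    simpa using ((hasDerivAt_id x).const_mul β).const_add α
  have hpa1 : pd 1 (famA α β) p = 0 := by
    refine (slice_y hAd).unique ?_
    unfold famA
    exact hasDerivAt_const y (α + β * x)
  have hCd : DifferentiableAt ℝ (famC β) p := by unfold famC; fun_prop
  have hpc0 : pd 0 (famC β) p = 0 := (slice_x hCd).unique (hasDerivAt_const x (3/4*β))
  have hpc1 : pd 1 (famC β) p = 0 := (slice_y hCd).unique (hasDerivAt_const y (3/4*β))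
  have hpb0 : pd 0 (famB α β γ) p =
      ((-(β*(3*y))) * (y^2+x) - (γ - 2*α*y - β*(y^3/3 + 3*x*y)) * 1) / (y^2+x)^2 := by
    refine (slice_x hBd).unique ?_
    have i1 : HasDerivAt (fun t : ℝ => y^3/3 + 3*t*y) (3*y) x := by
      simpa using (((hasDerivAt_id x).const_mul 3).mul_const y).const_add (y^3/3)
    have hnum : HasDerivAt (fun t : ℝ => γ - 2*α*y - β*(y^3/3 + 3*t*y)) (-(β*(3*y))) x := by
      simpa using (hasDerivAt_const x (γ - 2*α*y)).fun_sub (i1.const_mul β)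
    have hden : HasDerivAt (fun t : ℝ => y^2 + t) 1 x := by
      simpa using (hasDerivAt_id x).const_add (y^2)
    exact hnum.div hden hD
  have hpb1 : pd 1 (famB α β γ) p =
      ((-(2*α) - β*(y^2 + 3*x)) * (y^2+x) - (γ - 2*α*y - β*(y^3/3 + 3*x*y)) * (2*y)) / (y^2+x)^2 := by
    refine (slice_y hBd).unique ?_
    have i1 : HasDerivAt (fun s : ℝ => s^3/3 + 3*x*s) (y^2 + 3*x) y := by
      have := ((hasDerivAt_pow 3 y).div_const 3).add ((hasDerivAt_id y).const_mul (3*x))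
      exact this.congr_deriv (by push_cast; ring)
    have hnum : HasDerivAt (fun s : ℝ => γ - 2*α*s - β*(s^3/3 + 3*x*s))
        (-(2*α) - β*(y^2 + 3*x)) y := by
      have := ((hasDerivAt_const y γ).sub ((hasDerivAt_id y).const_mul (2*α))).sub
        (i1.const_mul β)
      exact this.congr_deriv (by push_cast; ring)
    have hden : HasDerivAt (fun s : ℝ => s^2 + x) (2*y) y := by
      have := (hasDerivAt_pow 2 y).add_const x
      exact this.congr_deriv (by push_cast; ring)
    have h := hnum.div hden hD
    exact h.congr_deriv (by push_cast; ring)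
  refine ⟨hpa1, ?_, ?_, hpc0⟩
  · rw [hpa0, hpb1]
    show (y^2+x) * β + (y^2+x) * _ + 2 * (α + β * x)
        + 2 * y * ((γ - 2*α*y - β*(y^3/3 + 3*x*y)) / (y^2+x)) = 0
    field_simp
    ring
  · rw [hpb0, hpc1]
    show (y^2+x) * _ + (y^2+x) * 0 + ((γ - 2*α*y - β*(y^3/3 + 3*x*y)) / (y^2+x))
        + 4 * y * (3/4*β) = 0
    field_simp
    ring

lemma spanSol {a b c : ℝ × ℝ → ℝ} (h : Sol3d a b c) :
    ∃ t₁ t₂ t₃ : ℝ, ∀ p ∈ (Set.Ioi 0 ×ˢ Set.Ioi 0 : Set (ℝ × ℝ)),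
      a p = t₁ * famA 1 0 p + t₂ * famA 0 1 p + t₃ * famA 0 0 p ∧
      b p = t₁ * famB 1 0 0 p + t₂ * famB 0 1 0 p + t₃ * famB 0 0 1 p ∧
      c p = t₁ * famC 0 p + t₂ * famC 1 p + t₃ * famC 0 p := by
  obtain ⟨ha, hb, hc, heq⟩ := h
  have hU : IsOpen ((Set.Ioi 0 ×ˢ Set.Ioi 0 : Set (ℝ × ℝ))) := isOpen_Ioi.prod isOpen_Ioi
  have one_mem : (1:ℝ) ∈ Set.Ioi (0:ℝ) := Set.mem_Ioi.mpr one_pos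
  have hda : ∀ p ∈ (Set.Ioi 0 ×ˢ Set.Ioi 0 : Set (ℝ × ℝ)), DifferentiableAt ℝ a p :=
    fun p hp => (ha.contDiffAt (hU.mem_nhds hp)).differentiableAt (by simp)
  have hdb : ∀ p ∈ (Set.Ioi 0 ×ˢ Set.Ioi 0 : Set (ℝ × ℝ)), DifferentiableAt ℝ b p :=
    fun p hp => (hb.contDiffAt (hU.mem_nhds hp)).differentiableAt (by simp)
  have hdc : ∀ p ∈ (Set.Ioi 0 ×ˢ Set.Ioi 0 : Set (ℝ × ℝ)), DifferentiableAt ℝ c p :=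
    fun p hp => (hc.contDiffAt (hU.mem_nhds hp)).differentiableAt (by simp)
  set A : ℝ → ℝ := fun t => a (t, 1) with hAdef
  set C : ℝ → ℝ := fun s => c (1, s) with hCdef
  -- a is a function of x only, c of y only
  have haA : ∀ x ∈ Set.Ioi (0:ℝ), ∀ y ∈ Set.Ioi (0:ℝ), a (x, y) = A x := by
    intro x hx y hy
    refine constIoi (f := fun s => a (x, s)) ?_ y hy
    intro s hs
    have h1 := slice_y (hda (x, s) ⟨hx, hs⟩)
    rwa [(heq (x, s) ⟨hx, hs⟩).1] at h1
  have hcC : ∀ x ∈ Set.Ioi (0:ℝ), ∀ y ∈ Set.Ioi (0:ℝ), c (x, y) = C y := by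
    intro x hx y hy
    refine constIoi (f := fun t => c (t, y)) ?_ x hx
    intro t ht
    have h1 := slice_x (hdc (t, y) ⟨ht, hy⟩)
    rwa [(heq (t, y) ⟨ht, hy⟩).2.2.2] at h1
  -- smoothness of slices
  have hAc : ContDiffOn ℝ (⊤:ℕ∞) A (Set.Ioi 0) := by
    refine ha.comp ((contDiff_id.prodMk contDiff_const).contDiffOn) ?_
    intro t ht
    exact ⟨ht, one_mem⟩
  have hCc : ContDiffOn ℝ (⊤:ℕ∞) C (Set.Ioi 0) := by
    refine hc.comp ((contDiff_const.prodMk contDiff_id).contDiffOn) ?_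
    intro t ht
    exact ⟨one_mem, ht⟩
  set A1 : ℝ → ℝ := deriv A with hA1def
  set A2 : ℝ → ℝ := deriv A1 with hA2def
  set A3 : ℝ → ℝ := deriv A2 with hA3def
  set A4 : ℝ → ℝ := deriv A3 with hA4def
  set C1 : ℝ → ℝ := deriv C with hC1def
  have hA1c : ContDiffOn ℝ (⊤:ℕ∞) A1 (Set.Ioi 0) := derivCD hAc
  have hA2c : ContDiffOn ℝ (⊤:ℕ∞) A2 (Set.Ioi 0) := derivCD hA1c
  have hA3c : ContDiffOn ℝ (⊤:ℕ∞) A3 (Set.Ioi 0) := derivCD hA2c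
  -- pd 0 a = A1, pd 1 c = C1
  have hpda : ∀ x ∈ Set.Ioi (0:ℝ), ∀ y ∈ Set.Ioi (0:ℝ), pd 0 a (x, y) = A1 x := by
    intro x hx y hy
    have h1 : HasDerivAt (fun t => a (t, y)) (pd 0 a (x, y)) x := slice_x (hda (x, y) ⟨hx, hy⟩)
    have hEq : A =ᶠ[nhds x] (fun t => a (t, y)) := by
      filter_upwards [isOpen_Ioi.mem_nhds hx] with t ht
      exact (haA t ht y hy).symm
    have h2 : HasDerivAt A (pd 0 a (x, y)) x := h1.congr_of_eventuallyEq hEq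
    exact (h2.unique (derivHD hAc hx))
  have hpdc : ∀ x ∈ Set.Ioi (0:ℝ), ∀ y ∈ Set.Ioi (0:ℝ), pd 1 c (x, y) = C1 y := by
    intro x hx y hy
    have h1 : HasDerivAt (fun s => c (x, s)) (pd 1 c (x, y)) y := slice_y (hdc (x, y) ⟨hx, hy⟩)
    have hEq : C =ᶠ[nhds y] (fun s => c (x, s)) := by
      filter_upwards [isOpen_Ioi.mem_nhds hy] with s hs
      exact (hcC x hx s hs).symm
    have h2 : HasDerivAt C (pd 1 c (x, y)) y := h1.congr_of_eventuallyEq hEq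
    exact (h2.unique (derivHD hCc hy))
  -- definition of f and the integrated relation (star)
  set f : ℝ → ℝ := fun t => (1+t) * b (t, 1) + A1 t * (1/3 + t) + 2 * A t with hfdef
  have hBslc : ContDiffOn ℝ (⊤:ℕ∞) (fun t : ℝ => b (t, 1)) (Set.Ioi 0) := by
    refine hb.comp ((contDiff_id.prodMk contDiff_const).contDiffOn) ?_
    intro t ht
    exact ⟨ht, one_mem⟩
  have hfc : ContDiffOn ℝ (⊤:ℕ∞) f (Set.Ioi 0) := by
    rw [hfdef]
    exact (((contDiffOn_const.add contDiffOn_id).mul hBslc).add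
      (hA1c.mul (contDiffOn_const.add contDiffOn_id))).add (contDiffOn_const.mul hAc)
  set f1 : ℝ → ℝ := deriv f with hf1def
  set f2 : ℝ → ℝ := deriv f1 with hf2def
  set f3 : ℝ → ℝ := deriv f2 with hf3def
  have hf1c : ContDiffOn ℝ (⊤:ℕ∞) f1 (Set.Ioi 0) := derivCD hfc
  have hf2c : ContDiffOn ℝ (⊤:ℕ∞) f2 (Set.Ioi 0) := derivCD hf1c
  have hstar : ∀ x ∈ Set.Ioi (0:ℝ), ∀ y ∈ Set.Ioi (0:ℝ),
      (y^2+x) * b (x, y) = f x - A1 x * (y^3/3 + x*y) - 2 * A x * y := by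
    intro x hx y hy
    have hg : ∀ s ∈ Set.Ioi (0:ℝ), HasDerivAt
        (fun s : ℝ => (s^2+x) * b (x, s) + A1 x * (s^3/3 + x*s) + 2 * A x * s) 0 s := by
      intro s hs
      have hbs : HasDerivAt (fun s' => b (x, s')) (pd 1 b (x, s)) s :=
        slice_y (hdb (x, s) ⟨hx, hs⟩)
      have hd1 : HasDerivAt (fun s' : ℝ => s'^2 + x) (2*s) s := by
        have := (hasDerivAt_pow 2 s).add_const x
        exact this.congr_deriv (by push_cast; ring)
      have hcub : HasDerivAt (fun s' : ℝ => A1 x * (s'^3/3 + x*s')) (A1 x * (s^2 + x)) s := by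
        have i1 : HasDerivAt (fun s' : ℝ => s'^3/3 + x*s') (s^2 + x) s := by
          have := ((hasDerivAt_pow 3 s).div_const 3).add ((hasDerivAt_id s).const_mul x)
          exact this.congr_deriv (by push_cast; ring)
        exact i1.const_mul (A1 x)
      have hlin : HasDerivAt (fun s' : ℝ => 2 * A x * s') (2 * A x) s := by
        simpa using (hasDerivAt_id s).const_mul (2 * A x)
      have htot := ((hd1.mul hbs).add hcub).add hlin
      have e2 := (heq (x, s) ⟨hx, hs⟩).2.1
      rw [hpda x hx s hs, haA x hx s hs] at e2
      have hval : 2*s * b (x, s) + (s^2+x) * pd 1 b (x, s) + A1 x * (s^2 + x) + 2 * A x = 0 := by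
        linarith
      rw [show (0:ℝ) = 2*s * b (x, s) + (s^2+x) * pd 1 b (x, s) + A1 x * (s^2 + x) + 2 * A x
        from hval.symm]
      exact htot.congr_deriv (by ring)
    have hcst : (y^2+x) * b (x, y) + A1 x * (y^3/3 + x*y) + 2 * A x * y
        = (1^2+x) * b (x, 1) + A1 x * (1^3/3 + x*1) + 2 * A x * 1 := constIoi hg y hy
    have hfx : f x = (1+x) * b (x, 1) + A1 x * (1/3 + x) + 2 * A x := by rw [hfdef]
    linear_combination hcst - hfx
  -- identity (I)
  have hI : ∀ x ∈ Set.Ioi (0:ℝ), ∀ y ∈ Set.Ioi (0:ℝ),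
      f1 x - A2 x * (y^3/3 + x*y) - 3 * A1 x * y + (y^2+x) * C1 y + 4*y*C y = 0 := by
    intro x hx y hy
    have hbs : HasDerivAt (fun t => b (t, y)) (pd 0 b (x, y)) x := slice_x (hdb (x, y) ⟨hx, hy⟩)
    have hL : HasDerivAt (fun t : ℝ => (y^2+t) * b (t, y))
        (1 * b (x, y) + (y^2+x) * pd 0 b (x, y)) x :=
      (((hasDerivAt_id x).const_add (y^2)).mul hbs)
    have hR : HasDerivAt (fun t : ℝ => f t - A1 t * (y^3/3 + t*y) - 2 * A t * y)
        (f1 x - (A2 x * (y^3/3 + x*y) + A1 x * (1*y)) - 2 * A1 x * y) x := by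
      have h1 : HasDerivAt f (f1 x) x := derivHD hfc hx
      have h2 : HasDerivAt A1 (A2 x) x := derivHD hA1c hx
      have h3 : HasDerivAt (fun t : ℝ => y^3/3 + t*y) (1*y) x :=
        ((hasDerivAt_id x).mul_const y).const_add (y^3/3)
      have h4 : HasDerivAt A (A1 x) x := derivHD hAc hx
      exact (h1.sub (h2.mul h3)).sub ((h4.const_mul 2).mul_const y)
    have hEq : (fun t : ℝ => f t - A1 t * (y^3/3 + t*y) - 2 * A t * y)
        =ᶠ[nhds x] (fun t : ℝ => (y^2+t) * b (t, y)) := by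
      filter_upwards [isOpen_Ioi.mem_nhds hx] with t ht
      exact (hstar t ht y hy).symm
    have hL' := hL.congr_of_eventuallyEq hEq
    have hval := hL'.unique hR
    have e3 := (heq (x, y) ⟨hx, hy⟩).2.2.1
    rw [hpdc x hx y hy, hcC x hx y hy] at e3
    linear_combination e3 - hval
  -- identity (II)
  have hII : ∀ x ∈ Set.Ioi (0:ℝ), ∀ y ∈ Set.Ioi (0:ℝ),
      f2 x - A3 x * (y^3/3 + x*y) - 4 * A2 x * y + C1 y = 0 := by
    intro x hx y hy
    have hF : HasDerivAt (fun t : ℝ =>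
        f1 t - A2 t * (y^3/3 + t*y) - 3 * A1 t * y + (y^2+t) * C1 y + 4*y*C y)
        (f2 x - (A3 x * (y^3/3 + x*y) + A2 x * (1*y)) - 3 * A2 x * y + 1 * C1 y) x := by
      have h1 : HasDerivAt f1 (f2 x) x := derivHD hf1c hx
      have h2 : HasDerivAt A2 (A3 x) x := derivHD hA2c hx
      have h3 : HasDerivAt (fun t : ℝ => y^3/3 + t*y) (1*y) x :=
        ((hasDerivAt_id x).mul_const y).const_add (y^3/3)
      have h4 : HasDerivAt A1 (A2 x) x := derivHD hA1c hx
      have h5 : HasDerivAt (fun t : ℝ => (y^2+t) * C1 y) (1 * C1 y) x :=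
        ((hasDerivAt_id x).const_add (y^2)).mul_const (C1 y)
      exact ((((h1.sub (h2.mul h3)).sub ((h4.const_mul 3).mul_const y)).add h5)).add_const
        (4*y*C y)
    have hF0 : HasDerivAt (fun t : ℝ =>
        f1 t - A2 t * (y^3/3 + t*y) - 3 * A1 t * y + (y^2+t) * C1 y + 4*y*C y) 0 x := by
      refine (hasDerivAt_const x 0).congr_of_eventuallyEq ?_
      filter_upwards [isOpen_Ioi.mem_nhds hx] with t ht
      exact hI t ht y hy
    have hval := hF0.unique hF
    linear_combination -hval
  -- identity (III)
  have hIII : ∀ x ∈ Set.Ioi (0:ℝ), ∀ y ∈ Set.Ioi (0:ℝ),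
      f3 x - A4 x * (y^3/3 + x*y) - 5 * A3 x * y = 0 := by
    intro x hx y hy
    have hF : HasDerivAt (fun t : ℝ => f2 t - A3 t * (y^3/3 + t*y) - 4 * A2 t * y + C1 y)
        (f3 x - (A4 x * (y^3/3 + x*y) + A3 x * (1*y)) - 4 * A3 x * y) x := by
      have h1 : HasDerivAt f2 (f3 x) x := derivHD hf2c hx
      have h2 : HasDerivAt A3 (A4 x) x := derivHD hA3c hx
      have h3 : HasDerivAt (fun t : ℝ => y^3/3 + t*y) (1*y) x :=
        ((hasDerivAt_id x).mul_const y).const_add (y^3/3)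
      have h4 : HasDerivAt A2 (A3 x) x := derivHD hA2c hx
      exact ((h1.sub (h2.mul h3)).sub ((h4.const_mul 4).mul_const y)).add_const (C1 y)
    have hF0 : HasDerivAt (fun t : ℝ => f2 t - A3 t * (y^3/3 + t*y) - 4 * A2 t * y + C1 y)
        0 x := by
      refine (hasDerivAt_const x 0).congr_of_eventuallyEq ?_
      filter_upwards [isOpen_Ioi.mem_nhds hx] with t ht
      exact hII t ht y hy
    have hval := hF0.unique hF
    linear_combination -hval
  -- third derivatives vanish
  have hA3z : ∀ x ∈ Set.Ioi (0:ℝ), A3 x = 0 ∧ f3 x = 0 := by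
    intro x hx
    have e1 := hIII x hx 1 (by norm_num)
    have e2 := hIII x hx 2 (by norm_num)
    have e3 := hIII x hx 3 (by norm_num)
    have h4 : A4 x = 0 := by linear_combination (-1/4)*e1 + (1/2)*e2 + (-1/4)*e3
    have hA3x : A3 x = 0 := by
      linear_combination (1/5)*e1 - (1/5)*e2 - (7/15 + x/5)*h4
    refine ⟨hA3x, ?_⟩
    linear_combination e1 + (1/3 + x)*h4 + 5*hA3x
  -- A2 and f2 constant
  have hA2const : ∀ x ∈ Set.Ioi (0:ℝ), A2 x = A2 1 := by
    refine constIoi ?_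
    intro x hx
    have := derivHD hA2c hx
    rwa [← hA3def, (hA3z x hx).1] at this
  have hf2const : ∀ x ∈ Set.Ioi (0:ℝ), f2 x = f2 1 := by
    refine constIoi ?_
    intro x hx
    have := derivHD hf2c hx
    rwa [← hf3def, (hA3z x hx).2] at this
  -- C1 in terms of constants
  have hC1v : ∀ y ∈ Set.Ioi (0:ℝ), C1 y = 4*(A2 1)*y - f2 1 := by
    intro y hy
    have hthis := hII 1 one_mem y hy
    have h31 := (hA3z 1 one_mem).1
    linear_combination hthis + (y^3/3 + 1*y)*h31
  -- C in terms of constants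
  have hCv : ∀ y ∈ Set.Ioi (0:ℝ), C y = C 1 + 2*(A2 1)*(y^2-1) - f2 1*(y-1) := by
    intro y hy
    have hg : ∀ s ∈ Set.Ioi (0:ℝ), HasDerivAt
        (fun s : ℝ => C s - 2*(A2 1)*s^2 + f2 1*s) 0 s := by
      intro s hs
      have h1 : HasDerivAt C (C1 s) s := derivHD hCc hs
      have h2 : HasDerivAt (fun s' : ℝ => 2*(A2 1)*s'^2) (2*(A2 1)*(2*s)) s := by
        have := (hasDerivAt_pow 2 s).const_mul (2*(A2 1))
        exact this.congr_deriv (by push_cast; ring)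
      have h3 : HasDerivAt (fun s' : ℝ => f2 1 * s') (f2 1) s := by
        simpa using (hasDerivAt_id s).const_mul (f2 1)
      have htot := (h1.sub h2).add h3
      have hval : C1 s - 2*(A2 1)*(2*s) + f2 1 = 0 := by
        have := hC1v s hs
        linarith
      rwa [hval] at htot
    have hcst : C y - 2*(A2 1)*y^2 + f2 1*y = C 1 - 2*(A2 1)*1^2 + f2 1*1 :=
      constIoi hg y hy
    linear_combination hcst
  -- the constants A2 1 and f2 1 vanish
  have hμν : A2 1 = 0 ∧ f2 1 = 0 := by
    have E : ∀ y ∈ Set.Ioi (0:ℝ),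
        f1 1 - A2 1 * (y^3/3 + 1*y) - 3 * A1 1 * y + (y^2+1) * (4*(A2 1)*y - f2 1)
          + 4*y*(C 1 + 2*(A2 1)*(y^2-1) - f2 1*(y-1)) = 0 := by
      intro y hy
      have := hI 1 one_mem y hy
      rw [hC1v y hy, hCv y hy] at this
      linarith
    have E1 := E 1 (by norm_num)
    have E2 := E 2 (by norm_num)
    have E3 := E 3 (by norm_num)
    have E4 := E 4 (by norm_num)
    norm_num at E1 E2 E3 E4
    constructor <;> linarith
  obtain ⟨hμ, hν⟩ := hμν
  -- A1 is the constant 4*C 1/3 and f1 vanishes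
  have hA1f1 : ∀ x ∈ Set.Ioi (0:ℝ), A1 x = 4*(C 1)/3 ∧ f1 x = 0 := by
    intro x hx
    have E1 := hI x hx 1 (by norm_num)
    have E2 := hI x hx 2 (by norm_num)
    rw [hC1v 1 (by norm_num), hCv 1 (by norm_num)] at E1
    rw [hC1v 2 (by norm_num), hCv 2 (by norm_num)] at E2
    have hA2x : A2 x = 0 := (hA2const x hx).trans hμ
    rw [hA2x, hμ, hν] at E1 E2
    norm_num at E1 E2
    constructor <;> linarith
  -- f constant, A affine, C constant
  have hfconst : ∀ x ∈ Set.Ioi (0:ℝ), f x = f 1 := by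
    refine constIoi ?_
    intro x hx
    have := derivHD hfc hx
    rwa [← hf1def, (hA1f1 x hx).2] at this
  have hAv : ∀ x ∈ Set.Ioi (0:ℝ), A x = A 1 + (4*(C 1)/3)*(x-1) := by
    intro x hx
    have hg : ∀ s ∈ Set.Ioi (0:ℝ), HasDerivAt
        (fun s : ℝ => A s - (4*(C 1)/3)*s) 0 s := by
      intro s hs
      have h1 : HasDerivAt A (A1 s) s := derivHD hAc hs
      have h2 : HasDerivAt (fun s' : ℝ => (4*(C 1)/3)*s') (4*(C 1)/3) s := by
        simpa using (hasDerivAt_id s).const_mul (4*(C 1)/3)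
      have htot := h1.sub h2
      have hval : A1 s - 4*(C 1)/3 = 0 := by
        have := (hA1f1 s hs).1
        linarith
      rwa [show A1 s - 4*(C 1)/3 = 0 from hval] at htot
    have hcst : A x - (4*(C 1)/3)*x = A 1 - (4*(C 1)/3)*1 := constIoi hg x hx
    linear_combination hcst
  have hCconst : ∀ y ∈ Set.Ioi (0:ℝ), C y = C 1 := by
    intro y hy
    have := hCv y hy
    rw [hμ, hν] at this
    linarith
  -- assemble
  refine ⟨A 1 - 4*(C 1)/3, 4*(C 1)/3, f 1, ?_⟩
  intro p hp
  obtain ⟨hx, hy⟩ := hp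
  have hx' : (0:ℝ) < p.1 := hx
  have hy' : (0:ℝ) < p.2 := hy
  have hDne : p.2^2 + p.1 ≠ 0 := by positivity
  have hap : a p = A p.1 := haA p.1 hx p.2 hy
  have hcp : c p = C p.2 := hcC p.1 hx p.2 hy
  have hbp : (p.2^2 + p.1) * b p = f 1 - (4*(C 1)/3) * (p.2^3/3 + p.1*p.2)
      - 2 * (A 1 + (4*(C 1)/3)*(p.1-1)) * p.2 := by
    have hst : (p.2^2 + p.1) * b p = f p.1 - A1 p.1 * (p.2^3/3 + p.1*p.2) - 2 * A p.1 * p.2 :=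
      hstar p.1 hx p.2 hy
    rw [hfconst p.1 hx, (hA1f1 p.1 hx).1, hAv p.1 hx] at hst
    exact hst
  refine ⟨?_, ?_, ?_⟩
  · rw [hap, hAv p.1 hx]
    simp only [famA]
    ring
  · have hbp' : b p = (f 1 - (4*(C 1)/3) * (p.2^3/3 + p.1*p.2)
        - 2 * (A 1 + (4*(C 1)/3)*(p.1-1)) * p.2) / (p.2^2 + p.1) := by
      rw [eq_div_iff hDne]
      linear_combination hbp
    simp only [famB]
    rw [hbp']
    field_simp
    ring
  · rw [hcp, hCconst p.2 hy]
    simp only [famC]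
    ring

/-- The space of quadratic-in-momenta integrals of the geodesic flow of
`ds² = 2(y²+x)dxdy` on `(0,∞)×(0,∞)` has dimension exactly 3. -/
theorem stmt12 :
    ∃ a₁ b₁ c₁ a₂ b₂ c₂ a₃ b₃ c₃ : ℝ × ℝ → ℝ,
      Sol3d a₁ b₁ c₁ ∧ Sol3d a₂ b₂ c₂ ∧ Sol3d a₃ b₃ c₃ ∧
      (∀ t₁ t₂ t₃ : ℝ,
        (∀ p ∈ (Set.Ioi 0 ×ˢ Set.Ioi 0 : Set (ℝ × ℝ)),
          t₁ * a₁ p + t₂ * a₂ p + t₃ * a₃ p = 0 ∧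
          t₁ * b₁ p + t₂ * b₂ p + t₃ * b₃ p = 0 ∧
          t₁ * c₁ p + t₂ * c₂ p + t₃ * c₃ p = 0) →
        t₁ = 0 ∧ t₂ = 0 ∧ t₃ = 0) ∧
      (∀ a b c : ℝ × ℝ → ℝ, Sol3d a b c →
        ∃ t₁ t₂ t₃ : ℝ, ∀ p ∈ (Set.Ioi 0 ×ˢ Set.Ioi 0 : Set (ℝ × ℝ)),
          a p = t₁ * a₁ p + t₂ * a₂ p + t₃ * a₃ p ∧
          b p = t₁ * b₁ p + t₂ * b₂ p + t₃ * b₃ p ∧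
          c p = t₁ * c₁ p + t₂ * c₂ p + t₃ * c₃ p) := by
  refine ⟨famA 1 0, famB 1 0 0, famC 0, famA 0 1, famB 0 1 0, famC 1,
    famA 0 0, famB 0 0 1, famC 0,
    famSol 1 0 0, famSol 0 1 0, famSol 0 0 1, ?_, ?_⟩
  · intro t₁ t₂ t₃ hcomb
    have h11 := hcomb ((1:ℝ), (1:ℝ)) ⟨by norm_num, by norm_num⟩
    have h21 := hcomb ((2:ℝ), (1:ℝ)) ⟨by norm_num, by norm_num⟩
    obtain ⟨ha11, hb11, -⟩ := h11
    obtain ⟨ha21, -, -⟩ := h21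
    simp only [famA, famB, famC] at ha11 hb11 ha21
    norm_num at ha11 hb11 ha21
    refine ⟨by linarith, by linarith, by linarith⟩
  · intro a b c hsol
    exact spanSol hsol
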